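/- For every integer t ≥ 1, in the graph G_t one has d(v_1, u_1) = d(v_1, u_2) = d(v_2, u_1) = d(v_2, u_2) = 3t + 3, and every vertex x of G_t other than u_1 and u_2 satisfies d(v_1, x) < 3t + 3; that is, u_1 and u_2 are exactly the vertices at the longest distance from v_1. -/
import Mathlib


open SimpleGraph Finset

/-- A `Fintype` instance for the vertex set of a vertex-deleted subgraph. -/
noncomputable instance instFintypeNe {V : Type*} [Fintype V] (v : V) :
    Fintype {u : V // u ≠ v} :=
  (Set.toFinite {u : V | u ≠ v}).fintype

/-- The graph obtained from `G` by deleting the vertex `v` (an induced subgraph). -/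
def deleteVertex {V : Type*} (G : SimpleGraph V) (v : V) :
    SimpleGraph {u : V // u ≠ v} :=
  G.induce {u : V | u ≠ v}

/-- The Wiener index of a finite simple graph: the sum of distances over all
unordered pairs of vertices. -/
noncomputable def wiener {V : Type*} [Fintype V] (G : SimpleGraph V) : ℕ :=
  (∑ u : V, ∑ v : V, G.dist u v) / 2

/-- `v` is a Šoltés vertex of `G` if `G - v` is connected and has the same Wiener index. -/
def IsSoltes {V : Type*} [Fintype V] (G : SimpleGraph V) (v : V) : Prop :=
  (deleteVertex G v).Connected ∧ wiener (deleteVertex G v) = wiener G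

/-- A graph is cubic (3-regular) if every vertex has exactly 3 neighbours. -/
def IsCubic {V : Type*} (G : SimpleGraph V) : Prop :=
  ∀ v : V, (G.neighborSet v).ncard = 3

/-- A finite graph is 2-connected if it is connected, has at least 3 vertices,
and stays connected after deleting any one vertex. -/
def TwoConnected {V : Type*} [Fintype V] (G : SimpleGraph V) : Prop :=
  G.Connected ∧ 3 ≤ Fintype.card V ∧ ∀ v : V, (deleteVertex G v).Connected

/-! ### The graph `G_t`

`G_t` has `8t + 8` vertices: `2t` diamonds (copies of `K₄ − e`) arranged in a ring,
where each diamond `j` has vertices `A_j, B_j, C_j, D_j` (encoded as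
`Sum.inl (j, 0), …, Sum.inl (j, 3)`), `A_j, B_j` being its two degree-2 vertices;
consecutive diamonds are joined by the edges `B_j A_{j+1}`, and the remaining
connecting edge (between diamond `2t-1` and diamond `0`) is subdivided by the two
adjacent vertices `z₁, z₂` (encoded `Sum.inr 0, Sum.inr 1`); there is a 4-cycle
`c₁ c₁ₐ c₂ c₂ₐ` (encoded `Sum.inr 2, Sum.inr 4, Sum.inr 3, Sum.inr 5`) whose opposite
vertices `c₁, c₂` are joined to `z₁, z₂` respectively, and pendant leaves
`v₁, v₂` (encoded `Sum.inr 6, Sum.inr 7`) are attached to `c₁ₐ, c₂ₐ`. -/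

/-- The vertex type of the graph `G_t`. -/
abbrev GtV (t : ℕ) : Type := (Fin (2 * t) × Fin 4) ⊕ Fin 8

/-- The edges inside one diamond `K₄ − e`: `A–C, A–D, B–C, B–D, C–D` where
`A, B, C, D` are encoded as `0, 1, 2, 3`. -/
def diamondRel (a b : Fin 4) : Prop :=
  ((a : ℕ) = 0 ∧ (b : ℕ) = 2) ∨ ((a : ℕ) = 0 ∧ (b : ℕ) = 3) ∨
  ((a : ℕ) = 1 ∧ (b : ℕ) = 2) ∨ ((a : ℕ) = 1 ∧ (b : ℕ) = 3) ∨
  ((a : ℕ) = 2 ∧ (b : ℕ) = 3)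

/-- The base edge relation of `G_t` (symmetrized by `SimpleGraph.fromRel`). -/
def gtRel (t : ℕ) : GtV t → GtV t → Prop
  | Sum.inl (j, a), Sum.inl (k, b) =>
      -- edges inside a diamond, and the connecting edges `B_j A_{j+1}`
      (j = k ∧ diamondRel a b) ∨ ((k : ℕ) = (j : ℕ) + 1 ∧ (a : ℕ) = 1 ∧ (b : ℕ) = 0)
  | Sum.inl (j, a), Sum.inr m =>
      -- the edge `B_{2t-1} z₁` (half of the subdivided connecting edge)
      (j : ℕ) = 2 * t - 1 ∧ (a : ℕ) = 1 ∧ (m : ℕ) = 0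
  | Sum.inr m, Sum.inl (j, a) =>
      -- the edge `z₂ A_0` (the other half of the subdivided connecting edge)
      (m : ℕ) = 1 ∧ (j : ℕ) = 0 ∧ (a : ℕ) = 0
  | Sum.inr m, Sum.inr m' =>
      ((m : ℕ) = 0 ∧ (m' : ℕ) = 1) ∨    -- z₁ z₂
      ((m : ℕ) = 0 ∧ (m' : ℕ) = 2) ∨    -- z₁ c₁
      ((m : ℕ) = 1 ∧ (m' : ℕ) = 3) ∨    -- z₂ c₂
      ((m : ℕ) = 2 ∧ (m' : ℕ) = 4) ∨    -- c₁ c₁ₐ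
      ((m : ℕ) = 4 ∧ (m' : ℕ) = 3) ∨    -- c₁ₐ c₂
      ((m : ℕ) = 3 ∧ (m' : ℕ) = 5) ∨    -- c₂ c₂ₐ
      ((m : ℕ) = 5 ∧ (m' : ℕ) = 2) ∨    -- c₂ₐ c₁
      ((m : ℕ) = 4 ∧ (m' : ℕ) = 6) ∨    -- c₁ₐ v₁
      ((m : ℕ) = 5 ∧ (m' : ℕ) = 7)      -- c₂ₐ v₂

/-- The graph `G_t` on `8t + 8` vertices. -/
def GtGraph (t : ℕ) : SimpleGraph (GtV t) := SimpleGraph.fromRel (gtRel t)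

/-- The leaf `v₁` of `G_t`. -/
def gtv1 (t : ℕ) : GtV t := Sum.inr 6

/-- The leaf `v₂` of `G_t`. -/
def gtv2 (t : ℕ) : GtV t := Sum.inr 7

/-- The vertex `u₁ = B_{t-1}` of `G_t`: an endpoint of the edge joining the `t`-th and
`(t+1)`-st diamond, counting from the subdivided edge. -/
def gtu1 (t : ℕ) (ht : 1 ≤ t) : GtV t := Sum.inl (⟨t - 1, by omega⟩, 1)

/-- The vertex `u₂ = A_t` of `G_t`: the other endpoint of the edge joining the `t`-th
and `(t+1)`-st diamond, counting from the subdivided edge. -/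
def gtu2 (t : ℕ) (ht : 1 ≤ t) : GtV t := Sum.inl (⟨t, by omega⟩, 0)

/-! ### Auxiliary machinery for computing distances in `G_t`. -/

/-- Generic lemma: if `f` is a "distance-like" function for the source `v`, then
`G.dist v x = f x` for all `x`. -/
lemma dist_eq_of_fn {V : Type*} (G : SimpleGraph V) (f : V → ℕ) (v : V)
    (hv : f v = 0)
    (hv0 : ∀ x, f x = 0 → x = v)
    (hlip : ∀ a b, G.Adj a b → f b ≤ f a + 1)
    (hstep : ∀ x, f x ≠ 0 → ∃ y, G.Adj y x ∧ f y + 1 = f x) :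
    ∀ x, G.dist v x = f x := by
  have up : ∀ n x, f x = n → ∃ p : G.Walk v x, p.length ≤ n := by
    intro n
    induction n with
    | zero =>
      intro x hx
      obtain rfl := hv0 x hx
      exact ⟨SimpleGraph.Walk.nil, le_refl _⟩
    | succ n ih =>
      intro x hx
      obtain ⟨y, hyx, hfy⟩ := hstep x (by omega)
      obtain ⟨p, hp⟩ := ih y (by omega)
      exact ⟨p.concat hyx, by rw [SimpleGraph.Walk.length_concat]; omega⟩
  intro x
  obtain ⟨p, hp⟩ := up (f x) x rfl
  have h1 : G.dist v x ≤ f x := le_trans (SimpleGraph.dist_le p) hp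
  have hr : G.Reachable v x := ⟨p⟩
  obtain ⟨q, hq⟩ := hr.exists_walk_length_eq_dist
  have low : ∀ {a b : V} (q : G.Walk a b), f b ≤ f a + q.length := by
    intro a b q
    induction q with
    | nil => simp
    | @cons a c b h p ih =>
      rw [SimpleGraph.Walk.length_cons]
      have := hlip _ _ h
      omega
  have h2 := low q
  rw [hq, hv] at h2
  omega

/-- Distance from the leaf side to a vertex of the `j`-th diamond (`a ∈ {0,1,2,3}`
codes `A,B,C,D`). -/
def ringPhi (t j a : ℕ) : ℕ :=
  if a = 0 then min (4 + 3 * j) (6 * t + 3 - 3 * j)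
  else if a = 1 then min (6 + 3 * j) (6 * t + 1 - 3 * j)
  else min (5 + 3 * j) (6 * t + 2 - 3 * j)

/-- Distances from `v₁` to the eight special vertices. -/
def gtab1 : ℕ → ℕ := fun m =>
  if m = 0 then 3 else if m = 1 then 3 else if m = 2 then 2 else if m = 3 then 2
  else if m = 4 then 1 else if m = 5 then 3 else if m = 6 then 0 else 4

/-- Distances from `v₂` to the eight special vertices. -/
def gtab2 : ℕ → ℕ := fun m =>
  if m = 0 then 3 else if m = 1 then 3 else if m = 2 then 2 else if m = 3 then 2
  else if m = 4 then 3 else if m = 5 then 1 else if m = 6 then 4 else 0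

/-- The candidate distance function from the leaf (`v₁` or `v₂` according to `g`). -/
def phiG (t : ℕ) (g : ℕ → ℕ) : GtV t → ℕ
  | Sum.inl (j, a) => ringPhi t j a
  | Sum.inr m => g m

lemma gt_adj_iff (t : ℕ) (a b : GtV t) :
    (GtGraph t).Adj a b ↔ a ≠ b ∧ (gtRel t a b ∨ gtRel t b a) :=
  SimpleGraph.fromRel_adj _ _ _

lemma phiG_inl (t : ℕ) (g : ℕ → ℕ) (j : Fin (2 * t)) (a : Fin 4) :
    phiG t g (Sum.inl (j, a)) = ringPhi t j a := rfl

lemma phiG_inr (t : ℕ) (g : ℕ → ℕ) (m : Fin 8) :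
    phiG t g (Sum.inr m : GtV t) = g m := rfl

set_option maxHeartbeats 2000000 in
lemma gt_hlip (t : ℕ) (ht : 1 ≤ t) (g : ℕ → ℕ) (hg : g = gtab1 ∨ g = gtab2) :
    ∀ a b : GtV t, (GtGraph t).Adj a b → phiG t g b ≤ phiG t g a + 1 := by
  have hg0 : g 0 = 3 := by rcases hg with rfl | rfl <;> rfl
  have hg1 : g 1 = 3 := by rcases hg with rfl | rfl <;> rfl
  have key : ∀ a b : GtV t, gtRel t a b →
      phiG t g b ≤ phiG t g a + 1 ∧ phiG t g a ≤ phiG t g b + 1 := by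
    rintro (⟨j, a⟩ | m) (⟨k, b⟩ | m') h
    · simp only [gtRel, diamondRel] at h
      have hj := j.isLt
      have hk := k.isLt
      rw [phiG_inl, phiG_inl]
      rcases h with ⟨rfl, h⟩ | ⟨hk1, ha, hb⟩
      · rcases h with ⟨ha, hb⟩ | ⟨ha, hb⟩ | ⟨ha, hb⟩ | ⟨ha, hb⟩ | ⟨ha, hb⟩ <;>
          rw [ringPhi, ringPhi, ha, hb] <;> norm_num <;> omega
      · rw [ringPhi, ringPhi, ha, hb, hk1]
        norm_num
        omega
    · simp only [gtRel] at h
      obtain ⟨hj1, ha, hm⟩ := h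
      have hj := j.isLt
      rw [phiG_inl, phiG_inr, ringPhi, ha, hj1, hm, hg0]
      norm_num
      omega
    · simp only [gtRel] at h
      obtain ⟨hm, hj1, ha⟩ := h
      have hk := k.isLt
      rw [phiG_inl, phiG_inr, ringPhi, ha, hj1, hm, hg1]
      norm_num
      omega
    · simp only [gtRel] at h
      rw [phiG_inr, phiG_inr]
      rcases hg with rfl | rfl <;>
        rcases h with ⟨h1, h2⟩ | ⟨h1, h2⟩ | ⟨h1, h2⟩ | ⟨h1, h2⟩ | ⟨h1, h2⟩ |
          ⟨h1, h2⟩ | ⟨h1, h2⟩ | ⟨h1, h2⟩ | ⟨h1, h2⟩ <;>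
        rw [h1, h2] <;> simp [gtab1, gtab2]
  intro a b hab
  rw [gt_adj_iff] at hab
  rcases hab.2 with h | h
  · exact (key a b h).1
  · exact (key b a h).2

set_option maxHeartbeats 2000000 in
lemma gt_hstep_inl (t : ℕ) (ht : 1 ≤ t) (g : ℕ → ℕ) (hg0 : g 0 = 3) (hg1 : g 1 = 3)
    (j : Fin (2 * t)) (a : Fin 4) :
    ∃ y, (GtGraph t).Adj y (Sum.inl (j, a) : GtV t) ∧
      phiG t g y + 1 = phiG t g (Sum.inl (j, a)) := by
  have hj := j.isLt
  have ha4 := a.isLt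
  have hcase : (a : ℕ) = 0 ∨ (a : ℕ) = 1 ∨ (a : ℕ) = 2 ∨ (a : ℕ) = 3 := by omega
  rcases hcase with ha | ha | ha | ha
  · -- a = 0 : vertex A_j
    by_cases hf : 4 + 3 * (j : ℕ) ≤ 6 * t + 3 - 3 * (j : ℕ)
    · by_cases hz : (j : ℕ) = 0
      · refine ⟨Sum.inr 1, ?_, ?_⟩
        · rw [gt_adj_iff]
          refine ⟨by simp, Or.inl ?_⟩
          simp only [gtRel]
          exact ⟨by norm_num, hz, ha⟩
        · rw [phiG_inr, phiG_inl, ringPhi, ha, hz]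
          norm_num [hg1]
          omega
      · refine ⟨Sum.inl (⟨(j : ℕ) - 1, by omega⟩, 1), ?_, ?_⟩
        · rw [gt_adj_iff]
          constructor
          · simp only [ne_eq, Sum.inl.injEq, Prod.mk.injEq, Fin.ext_iff, not_and]
            intro _ h
            norm_num at h
            omega
          · refine Or.inl (Or.inr ⟨?_, by norm_num, ha⟩)
            simp only [Fin.val_mk]
            omega
        · rw [phiG_inl, phiG_inl, ringPhi, ringPhi, ha]
          norm_num [Fin.val_mk]
          omega
    · refine ⟨Sum.inl (j, 2), ?_, ?_⟩
      · rw [gt_adj_iff]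
        constructor
        · simp only [ne_eq, Sum.inl.injEq, Prod.mk.injEq, Fin.ext_iff, not_and]
          intro _ h
          norm_num at h
          omega
        · refine Or.inr (Or.inl ⟨rfl, ?_⟩)
          simp only [diamondRel]
          norm_num [ha]
      · rw [phiG_inl, phiG_inl, ringPhi, ringPhi, ha]
        norm_num
        omega
  · -- a = 1 : vertex B_j
    by_cases hf : 6 + 3 * (j : ℕ) ≤ 6 * t + 1 - 3 * (j : ℕ)
    · refine ⟨Sum.inl (j, 2), ?_, ?_⟩
      · rw [gt_adj_iff]
        constructor
        · simp only [ne_eq, Sum.inl.injEq, Prod.mk.injEq, Fin.ext_iff, not_and]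
          intro _ h
          norm_num at h
          omega
        · refine Or.inr (Or.inl ⟨rfl, ?_⟩)
          simp only [diamondRel]
          norm_num [ha]
      · rw [phiG_inl, phiG_inl, ringPhi, ringPhi, ha]
        norm_num
        omega
    · by_cases hz : (j : ℕ) = 2 * t - 1
      · refine ⟨Sum.inr 0, ?_, ?_⟩
        · rw [gt_adj_iff]
          refine ⟨by simp, Or.inr ?_⟩
          simp only [gtRel]
          exact ⟨hz, ha, by norm_num⟩
        · rw [phiG_inr, phiG_inl, ringPhi, ha, hz]
          norm_num [hg0]
          omega
      · refine ⟨Sum.inl (⟨(j : ℕ) + 1, by omega⟩, 0), ?_, ?_⟩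
        · rw [gt_adj_iff]
          constructor
          · simp only [ne_eq, Sum.inl.injEq, Prod.mk.injEq, Fin.ext_iff, not_and]
            intro _ h
            norm_num at h
            omega
          · refine Or.inr (Or.inr ⟨?_, ha, by norm_num⟩)
            simp only [Fin.val_mk]
        · rw [phiG_inl, phiG_inl, ringPhi, ringPhi, ha]
          norm_num [Fin.val_mk]
          omega
  · -- a = 2 : vertex C_j
    by_cases hf : 5 + 3 * (j : ℕ) ≤ 6 * t + 2 - 3 * (j : ℕ)
    · refine ⟨Sum.inl (j, 0), ?_, ?_⟩
      · rw [gt_adj_iff]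
        constructor
        · simp only [ne_eq, Sum.inl.injEq, Prod.mk.injEq, Fin.ext_iff, not_and]
          intro _ h
          norm_num at h
          omega
        · refine Or.inl (Or.inl ⟨rfl, ?_⟩)
          simp only [diamondRel]
          norm_num [ha]
      · rw [phiG_inl, phiG_inl, ringPhi, ringPhi, ha]
        norm_num
        omega
    · refine ⟨Sum.inl (j, 1), ?_, ?_⟩
      · rw [gt_adj_iff]
        constructor
        · simp only [ne_eq, Sum.inl.injEq, Prod.mk.injEq, Fin.ext_iff, not_and]
          intro _ h
          norm_num at h
          omega
        · refine Or.inl (Or.inl ⟨rfl, ?_⟩)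
          simp only [diamondRel]
          norm_num [ha]
      · rw [phiG_inl, phiG_inl, ringPhi, ringPhi, ha]
        norm_num
        omega
  · -- a = 3 : vertex D_j
    by_cases hf : 5 + 3 * (j : ℕ) ≤ 6 * t + 2 - 3 * (j : ℕ)
    · refine ⟨Sum.inl (j, 0), ?_, ?_⟩
      · rw [gt_adj_iff]
        constructor
        · simp only [ne_eq, Sum.inl.injEq, Prod.mk.injEq, Fin.ext_iff, not_and]
          intro _ h
          norm_num at h
          omega
        · refine Or.inl (Or.inl ⟨rfl, ?_⟩)
          simp only [diamondRel]
          norm_num [ha]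
      · rw [phiG_inl, phiG_inl, ringPhi, ringPhi, ha]
        norm_num
        omega
    · refine ⟨Sum.inl (j, 1), ?_, ?_⟩
      · rw [gt_adj_iff]
        constructor
        · simp only [ne_eq, Sum.inl.injEq, Prod.mk.injEq, Fin.ext_iff, not_and]
          intro _ h
          norm_num at h
          omega
        · refine Or.inl (Or.inl ⟨rfl, ?_⟩)
          simp only [diamondRel]
          norm_num [ha]
      · rw [phiG_inl, phiG_inl, ringPhi, ringPhi, ha]
        norm_num
        omega

lemma gt_hzero (t : ℕ) (g : ℕ → ℕ) (c : Fin 8) (hgc : ∀ m : ℕ, m < 8 → (g m = 0 ↔ m = (c : ℕ))) :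
    ∀ x : GtV t, phiG t g x = 0 → x = Sum.inr c := by
  rintro (⟨j, a⟩ | m) h
  · exfalso
    have hj := j.isLt
    rw [phiG_inl, ringPhi] at h
    split_ifs at h <;> omega
  · rw [phiG_inr] at h
    have hm := m.isLt
    have := (hgc m hm).mp h
    congr 1
    exact Fin.ext this

lemma gt_hstep1 (t : ℕ) (ht : 1 ≤ t) :
    ∀ x : GtV t, phiG t gtab1 x ≠ 0 →
      ∃ y, (GtGraph t).Adj y x ∧ phiG t gtab1 y + 1 = phiG t gtab1 x := by
  rintro (⟨j, a⟩ | m) hne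
  · exact gt_hstep_inl t ht gtab1 rfl rfl j a
  · have hm := m.isLt
    have hc : (m : ℕ) = 0 ∨ (m : ℕ) = 1 ∨ (m : ℕ) = 2 ∨ (m : ℕ) = 3 ∨ (m : ℕ) = 4 ∨
        (m : ℕ) = 5 ∨ (m : ℕ) = 6 ∨ (m : ℕ) = 7 := by omega
    rcases hc with h | h | h | h | h | h | h | h
    on_goal 1 => obtain rfl : m = (0 : Fin 8) := Fin.ext (by first | (rw [h]; rfl) | rw [h])
    on_goal 2 => obtain rfl : m = (1 : Fin 8) := Fin.ext (by first | (rw [h]; rfl) | rw [h])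
    on_goal 3 => obtain rfl : m = (2 : Fin 8) := Fin.ext (by first | (rw [h]; rfl) | rw [h])
    on_goal 4 => obtain rfl : m = (3 : Fin 8) := Fin.ext (by first | (rw [h]; rfl) | rw [h])
    on_goal 5 => obtain rfl : m = (4 : Fin 8) := Fin.ext (by first | (rw [h]; rfl) | rw [h])
    on_goal 6 => obtain rfl : m = (5 : Fin 8) := Fin.ext (by first | (rw [h]; rfl) | rw [h])
    on_goal 7 => obtain rfl : m = (6 : Fin 8) := Fin.ext (by first | (rw [h]; rfl) | rw [h])
    on_goal 8 => obtain rfl : m = (7 : Fin 8) := Fin.ext (by first | (rw [h]; rfl) | rw [h])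
    · exact ⟨Sum.inr 2, by rw [gt_adj_iff]; exact ⟨by simp, Or.inr (by simp only [gtRel]; decide)⟩, rfl⟩
    · exact ⟨Sum.inr 3, by rw [gt_adj_iff]; exact ⟨by simp, Or.inr (by simp only [gtRel]; decide)⟩, rfl⟩
    · exact ⟨Sum.inr 4, by rw [gt_adj_iff]; exact ⟨by simp, Or.inr (by simp only [gtRel]; decide)⟩, rfl⟩
    · exact ⟨Sum.inr 4, by rw [gt_adj_iff]; exact ⟨by simp, Or.inl (by simp only [gtRel]; decide)⟩, rfl⟩
    · exact ⟨Sum.inr 6, by rw [gt_adj_iff]; exact ⟨by simp, Or.inr (by simp only [gtRel]; decide)⟩, rfl⟩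
    · exact ⟨Sum.inr 2, by rw [gt_adj_iff]; exact ⟨by simp, Or.inr (by simp only [gtRel]; decide)⟩, rfl⟩
    · exact absurd rfl hne
    · exact ⟨Sum.inr 5, by rw [gt_adj_iff]; exact ⟨by simp, Or.inl (by simp only [gtRel]; decide)⟩, rfl⟩

lemma gt_hstep2 (t : ℕ) (ht : 1 ≤ t) :
    ∀ x : GtV t, phiG t gtab2 x ≠ 0 →
      ∃ y, (GtGraph t).Adj y x ∧ phiG t gtab2 y + 1 = phiG t gtab2 x := by
  rintro (⟨j, a⟩ | m) hne
  · exact gt_hstep_inl t ht gtab2 rfl rfl j a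
  · have hm := m.isLt
    have hc : (m : ℕ) = 0 ∨ (m : ℕ) = 1 ∨ (m : ℕ) = 2 ∨ (m : ℕ) = 3 ∨ (m : ℕ) = 4 ∨
        (m : ℕ) = 5 ∨ (m : ℕ) = 6 ∨ (m : ℕ) = 7 := by omega
    rcases hc with h | h | h | h | h | h | h | h
    on_goal 1 => obtain rfl : m = (0 : Fin 8) := Fin.ext (by first | (rw [h]; rfl) | rw [h])
    on_goal 2 => obtain rfl : m = (1 : Fin 8) := Fin.ext (by first | (rw [h]; rfl) | rw [h])
    on_goal 3 => obtain rfl : m = (2 : Fin 8) := Fin.ext (by first | (rw [h]; rfl) | rw [h])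
    on_goal 4 => obtain rfl : m = (3 : Fin 8) := Fin.ext (by first | (rw [h]; rfl) | rw [h])
    on_goal 5 => obtain rfl : m = (4 : Fin 8) := Fin.ext (by first | (rw [h]; rfl) | rw [h])
    on_goal 6 => obtain rfl : m = (5 : Fin 8) := Fin.ext (by first | (rw [h]; rfl) | rw [h])
    on_goal 7 => obtain rfl : m = (6 : Fin 8) := Fin.ext (by first | (rw [h]; rfl) | rw [h])
    on_goal 8 => obtain rfl : m = (7 : Fin 8) := Fin.ext (by first | (rw [h]; rfl) | rw [h])
    · exact ⟨Sum.inr 2, by rw [gt_adj_iff]; exact ⟨by simp, Or.inr (by simp only [gtRel]; decide)⟩, rfl⟩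
    · exact ⟨Sum.inr 3, by rw [gt_adj_iff]; exact ⟨by simp, Or.inr (by simp only [gtRel]; decide)⟩, rfl⟩
    · exact ⟨Sum.inr 5, by rw [gt_adj_iff]; exact ⟨by simp, Or.inl (by simp only [gtRel]; decide)⟩, rfl⟩
    · exact ⟨Sum.inr 5, by rw [gt_adj_iff]; exact ⟨by simp, Or.inr (by simp only [gtRel]; decide)⟩, rfl⟩
    · exact ⟨Sum.inr 2, by rw [gt_adj_iff]; exact ⟨by simp, Or.inl (by simp only [gtRel]; decide)⟩, rfl⟩
    · exact ⟨Sum.inr 7, by rw [gt_adj_iff]; exact ⟨by simp, Or.inr (by simp only [gtRel]; decide)⟩, rfl⟩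
    · exact ⟨Sum.inr 4, by rw [gt_adj_iff]; exact ⟨by simp, Or.inl (by simp only [gtRel]; decide)⟩, rfl⟩
    · exact absurd rfl hne

lemma gt_dist1 (t : ℕ) (ht : 1 ≤ t) :
    ∀ x : GtV t, (GtGraph t).dist (gtv1 t) x = phiG t gtab1 x := by
  refine dist_eq_of_fn _ _ _ rfl ?_ (gt_hlip t ht gtab1 (Or.inl rfl)) (gt_hstep1 t ht)
  exact gt_hzero t gtab1 6 (by decide)

lemma gt_dist2 (t : ℕ) (ht : 1 ≤ t) :
    ∀ x : GtV t, (GtGraph t).dist (gtv2 t) x = phiG t gtab2 x := by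
  refine dist_eq_of_fn _ _ _ rfl ?_ (gt_hlip t ht gtab2 (Or.inr rfl)) (gt_hstep2 t ht)
  exact gt_hzero t gtab2 7 (by decide)

/-- For every `t ≥ 1`, in `G_t` one has
`d(v₁,u₁) = d(v₁,u₂) = d(v₂,u₁) = d(v₂,u₂) = 3t + 3`, and every other vertex `x`
satisfies `d(v₁,x) < 3t + 3`; i.e. `u₁, u₂` are exactly the vertices at the longest
distance from `v₁`. -/
theorem gt_dist_v_u (t : ℕ) (ht : 1 ≤ t) :
    (GtGraph t).dist (gtv1 t) (gtu1 t ht) = 3 * t + 3 ∧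
    (GtGraph t).dist (gtv1 t) (gtu2 t ht) = 3 * t + 3 ∧
    (GtGraph t).dist (gtv2 t) (gtu1 t ht) = 3 * t + 3 ∧
    (GtGraph t).dist (gtv2 t) (gtu2 t ht) = 3 * t + 3 ∧
    ∀ x : GtV t, x ≠ gtu1 t ht → x ≠ gtu2 t ht →
      (GtGraph t).dist (gtv1 t) x < 3 * t + 3 := by
  have H1 := gt_dist1 t ht
  have H2 := gt_dist2 t ht
  have hu1 : phiG t gtab1 (gtu1 t ht) = 3 * t + 3 := by
    rw [gtu1, phiG_inl, ringPhi]
    norm_num [Fin.val_mk]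
    omega
  have hu2 : phiG t gtab1 (gtu2 t ht) = 3 * t + 3 := by
    rw [gtu2, phiG_inl, ringPhi]
    norm_num [Fin.val_mk]
    omega
  have hu1' : phiG t gtab2 (gtu1 t ht) = 3 * t + 3 := hu1
  have hu2' : phiG t gtab2 (gtu2 t ht) = 3 * t + 3 := hu2
  refine ⟨by rw [H1, hu1], by rw [H1, hu2], by rw [H2, hu1'], by rw [H2, hu2'], ?_⟩
  rintro (⟨j, a⟩ | m) hx1 hx2
  · rw [H1, phiG_inl]
    have hj := j.isLt
    have ha4 := a.isLt
    have hne1 : ¬((j : ℕ) = t - 1 ∧ (a : ℕ) = 1) := by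
      rintro ⟨h1, h2⟩
      apply hx1
      rw [gtu1]
      congr 1
      exact Prod.ext (Fin.ext (by first | (rw [h1]; rfl) | rw [h1])) (Fin.ext (by first | (rw [h2]; rfl) | rw [h2]))
    have hne2 : ¬((j : ℕ) = t ∧ (a : ℕ) = 0) := by
      rintro ⟨h1, h2⟩
      apply hx2
      rw [gtu2]
      congr 1
      exact Prod.ext (Fin.ext (by first | (rw [h1]; rfl) | rw [h1])) (Fin.ext (by first | (rw [h2]; rfl) | rw [h2]))
    rw [ringPhi]
    split_ifs <;> omega
  · rw [H1, phiG_inr, gtab1]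
    split_ifs <;> omega
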